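/- arXiv:2312.00965 — 4 statements merged into one kernel-verified Lean document; each statement's English description precedes it below -/
import Mathlib

section
/- Let κ ∈ ℤ with κ ≥ -1, Z > 0, and W : [0,Z] → ℝ be smooth and strictly positive. Define ζ(z) = ( ((κ+2)/2) ∫₀^z ω^{κ/2} √(W(ω)) dω )^{2/(κ+2)} for z ∈ [0,Z]. Then ζ is differentiable on (0,Z) with derivative ζ'(z) = (ζ(z)/z)^{-κ/2} √(W(z)), and ζ is a strictly increasing bijection from [0,Z] onto [0, ζ(Z)]. -/
open Set Filter MeasureTheory intervalIntegral Topology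

/-- Properties of the Langer variable `ζ`. -/
theorem langer_variable_deriv_and_bijection
    (κ : ℤ) (hκ : -1 ≤ κ) (Z : ℝ) (hZ : 0 < Z)
    (W : ℝ → ℝ) (hW : ContDiffOn ℝ (⊤ : ℕ∞) W (Icc 0 Z))
    (hWpos : ∀ z ∈ Icc (0:ℝ) Z, 0 < W z)
    (ζ : ℝ → ℝ)
    (hζ : ∀ z, ζ z = ((((κ:ℝ) + 2) / 2) *
        ∫ ω in (0:ℝ)..z, ω ^ ((κ:ℝ)/2) * Real.sqrt (W ω)) ^ (2 / ((κ:ℝ) + 2))) :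
    (∀ z ∈ Ioo (0:ℝ) Z,
        HasDerivAt ζ ((ζ z / z) ^ (-(κ:ℝ)/2) * Real.sqrt (W z)) z)
    ∧ StrictMonoOn ζ (Icc 0 Z)
    ∧ BijOn ζ (Icc 0 Z) (Icc 0 (ζ Z)) := by
  have hκR : (1:ℝ) ≤ (κ:ℝ) + 2 := by
    have : (-1:ℝ) ≤ (κ:ℝ) := by exact_mod_cast hκ
    linarith
  have hκ2 : (0:ℝ) < (κ:ℝ) + 2 := by linarith
  set c : ℝ := ((κ:ℝ) + 2) / 2 with hc
  set p : ℝ := 2 / ((κ:ℝ) + 2) with hp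
  have hcpos : 0 < c := by positivity
  have hppos : 0 < p := by positivity
  have hcp : c * p = 1 := by
    rw [hc, hp]; field_simp [hκ2.ne']
  set f : ℝ → ℝ := fun ω => ω ^ ((κ:ℝ)/2) * Real.sqrt (W ω) with hf
  set F : ℝ → ℝ := fun z => ∫ ω in (0:ℝ)..z, f ω with hF
  have hζ' : ∀ z, ζ z = (c * F z) ^ p := hζ
  have hWc : ContinuousOn W (Icc 0 Z) := hW.continuousOn
  have hsqWc : ContinuousOn (fun ω => Real.sqrt (W ω)) (Icc 0 Z) :=
    Real.continuous_sqrt.comp_continuousOn hWc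
  have hexp : (-1:ℝ) < (κ:ℝ)/2 := by linarith
  -- interval integrability on [0, z] for z ∈ [0, Z]
  have hint : ∀ z ∈ Icc (0:ℝ) Z, IntervalIntegrable f volume 0 z := by
    intro z hz
    have h1 : IntervalIntegrable (fun ω : ℝ => ω ^ ((κ:ℝ)/2)) volume 0 z :=
      intervalIntegral.intervalIntegrable_rpow' hexp
    refine h1.mul_continuousOn ?_
    refine hsqWc.mono ?_
    rw [uIcc_of_le hz.1]
    exact Icc_subset_Icc le_rfl hz.2
  -- positivity of F on (0, Z]
  have hFpos : ∀ z, 0 < z → z ≤ Z → 0 < F z := by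
    intro z hz0 hzZ
    refine intervalIntegral.intervalIntegral_pos_of_pos_on (hint z ⟨hz0.le, hzZ⟩) ?_ hz0
    intro x hx
    have hx0 : 0 < x := hx.1
    have hWx : 0 < W x := hWpos x ⟨hx0.le, hx.2.le.trans hzZ⟩
    exact mul_pos (Real.rpow_pos_of_pos hx0 _) (Real.sqrt_pos.mpr hWx)
  -- f continuous on Ioo 0 Z
  have hfc : ContinuousOn f (Ioo 0 Z) := by
    refine ContinuousOn.mul ?_ (hsqWc.mono Ioo_subset_Icc_self)
    exact fun x hx => (Real.continuousAt_rpow_const x _ (Or.inl (ne_of_gt hx.1))).continuousWithinAt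
  -- derivative of F on (0, Z)
  have hFd : ∀ z ∈ Ioo (0:ℝ) Z, HasDerivAt F (f z) z := by
    intro z hz
    have hmem : Ioo (0:ℝ) Z ∈ 𝓝 z := Ioo_mem_nhds hz.1 hz.2
    have hmeas : StronglyMeasurableAtFilter f (𝓝 z) volume :=
      ⟨Ioo 0 Z, hmem, (hfc.aestronglyMeasurable measurableSet_Ioo)⟩
    have hcont : ContinuousAt f z := hfc.continuousAt hmem
    exact intervalIntegral.integral_hasDerivAt_right (hint z ⟨hz.1.le, hz.2.le⟩) hmeas hcont
  -- the key derivative statement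
  have hderiv : ∀ z ∈ Ioo (0:ℝ) Z,
      HasDerivAt ζ ((ζ z / z) ^ (-(κ:ℝ)/2) * Real.sqrt (W z)) z := by
    intro z hz
    have hA : 0 < c * F z := mul_pos hcpos (hFpos z hz.1 hz.2.le)
    have h1 : HasDerivAt (fun t => (c * F t) ^ p)
        ((c * f z) * p * (c * F z) ^ (p - 1)) z :=
      ((hFd z hz).const_mul c).rpow_const (Or.inl (ne_of_gt hA))
    have hfun : ζ = fun t => (c * F t) ^ p := funext hζ'
    have h2 : HasDerivAt ζ ((c * f z) * p * (c * F z) ^ (p - 1)) z := hfun ▸ h1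
    have hz0 : 0 < z := hz.1
    have hzeta : ζ z = (c * F z) ^ p := hζ' z
    have hexp1 : p * (-(κ:ℝ)/2) = p - 1 := by
      rw [hp]; field_simp; ring
    have e1 : (ζ z / z) ^ (-(κ:ℝ)/2)
        = (c * F z) ^ (p - 1) / z ^ (-(κ:ℝ)/2) := by
      rw [hzeta, Real.div_rpow (Real.rpow_nonneg hA.le p) hz0.le,
        ← Real.rpow_mul hA.le, hexp1]
    have e2 : z ^ (-(κ:ℝ)/2) = (z ^ ((κ:ℝ)/2))⁻¹ := by
      rw [show (-(κ:ℝ)/2) = -((κ:ℝ)/2) by ring, Real.rpow_neg hz0.le]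
    have key : (ζ z / z) ^ (-(κ:ℝ)/2) * Real.sqrt (W z)
        = c * f z * p * (c * F z) ^ (p - 1) := by
      rw [e1, e2, div_eq_mul_inv, inv_inv]
      have hfz : f z = z ^ ((κ:ℝ)/2) * Real.sqrt (W z) := rfl
      rw [hfz]
      have h3 : c * (z ^ ((κ:ℝ)/2) * Real.sqrt (W z)) * p
          = z ^ ((κ:ℝ)/2) * Real.sqrt (W z) := by
        rw [mul_comm, ← mul_assoc, mul_comm p c, hcp, one_mul]
      rw [h3]
      ring
    rw [key]
    exact h2
  have hcontF : ContinuousOn F (Icc 0 Z) := by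
    have h := intervalIntegral.continuousOn_primitive_interval'
      (hint Z ⟨hZ.le, le_rfl⟩) (left_mem_uIcc)
    rwa [uIcc_of_le hZ.le] at h
  have hcontζ : ContinuousOn ζ (Icc 0 Z) := by
    rw [funext hζ']
    exact (continuousOn_const.mul hcontF).rpow_const fun x _ => Or.inr hppos.le
  have hmono : StrictMonoOn ζ (Icc 0 Z) := by
    apply strictMonoOn_of_deriv_pos (convex_Icc 0 Z) hcontζ
    intro x hx
    rw [interior_Icc] at hx
    rw [(hderiv x hx).deriv]
    have hzx : 0 < ζ x := by
      rw [hζ' x]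
      exact Real.rpow_pos_of_pos (mul_pos hcpos (hFpos x hx.1 hx.2.le)) p
    exact mul_pos (Real.rpow_pos_of_pos (div_pos hzx hx.1) _)
      (Real.sqrt_pos.mpr (hWpos x ⟨hx.1.le, hx.2.le⟩))
  have hζ0 : ζ 0 = 0 := by
    rw [hζ' 0]
    simp [hF, Real.zero_rpow (ne_of_gt hppos)]
  have hmem0 : (0:ℝ) ∈ Icc (0:ℝ) Z := ⟨le_rfl, hZ.le⟩
  have hmemZ : Z ∈ Icc (0:ℝ) Z := ⟨hZ.le, le_rfl⟩
  refine ⟨hderiv, hmono, ⟨?_, hmono.injOn, ?_⟩⟩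
  · intro x hx
    constructor
    · rw [← hζ0]; exact hmono.monotoneOn hmem0 hx hx.1
    · exact hmono.monotoneOn hx hmemZ hx.2
  · have h := intermediate_value_Icc hZ.le hcontζ
    rwa [hζ0] at h
end

section
/- Let κ ∈ ℤ with κ ≥ -1. The function ξ defined on [0,Z] by ζ(z) = z·ξ(z), where ζ(z) = ( ((κ+2)/2) ∫₀^z ω^{κ/2} √(W(ω)) dω )^{2/(κ+2)}, extends continuously to z = 0 with ξ(0)^{κ+2} = W(0). -/
open Set Filter

/-- The function `ξ(z) = ζ(z)/z` extends continuously to `z = 0`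
with `ξ(0)^(κ+2) = W 0`. -/
theorem langer_xi_extends_continuously
    (κ : ℤ) (hκ : -1 ≤ κ) (Z : ℝ) (hZ : 0 < Z)
    (W : ℝ → ℝ) (hW : ContDiffOn ℝ (⊤ : ℕ∞) W (Icc 0 Z))
    (hWpos : ∀ z ∈ Icc (0:ℝ) Z, 0 < W z)
    (ζ : ℝ → ℝ)
    (hζ : ∀ z, ζ z = ((((κ:ℝ) + 2) / 2) *
        ∫ ω in (0:ℝ)..z, ω ^ ((κ:ℝ)/2) * Real.sqrt (W ω)) ^ (2 / ((κ:ℝ) + 2)))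
    (ξ : ℝ → ℝ) (hξ : ∀ z ∈ Ioc (0:ℝ) Z, ξ z = ζ z / z) :
    ∃ L : ℝ, Tendsto ξ (nhdsWithin 0 (Ioi 0)) (nhds L) ∧ L ^ ((κ:ℝ) + 2) = W 0 := by
  have hκR : (-1:ℝ) ≤ (κ:ℝ) := by exact_mod_cast hκ
  set p : ℝ := (κ:ℝ)/2 with hpdef
  have hp : (-1:ℝ) < p := by rw [hpdef]; linarith
  have hp1 : (0:ℝ) < p + 1 := by linarith
  have hc : ((κ:ℝ)+2)/2 = p + 1 := by rw [hpdef]; ring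
  have hκ2 : ((κ:ℝ)+2) ≠ 0 := by linarith
  have hW0 : 0 < W 0 := hWpos 0 ⟨le_refl 0, hZ.le⟩
  set s := Real.sqrt (W 0) with hsdef
  have hs : 0 < s := Real.sqrt_pos.mpr hW0
  have hsc : ContinuousOn (fun ω => Real.sqrt (W ω)) (Icc 0 Z) :=
    Real.continuous_sqrt.comp_continuousOn hW.continuousOn
  set e : ℝ := 2 / ((κ:ℝ) + 2) with hedef
  have hpe : (p + 1) * e = 1 := by rw [hedef, hpdef]; field_simp
  have hInt : ∀ z ∈ Ioc (0:ℝ) Z, IntervalIntegrable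
      (fun ω => ω ^ p * Real.sqrt (W ω)) MeasureTheory.volume 0 z := by
    intro z hz
    refine (intervalIntegral.intervalIntegrable_rpow' hp).mul_continuousOn ?_
    refine hsc.mono ?_
    rw [uIcc_of_le hz.1.le]
    exact Icc_subset_Icc le_rfl hz.2
  have key : Tendsto (fun z => (p+1) * (∫ ω in (0:ℝ)..z, ω ^ p * Real.sqrt (W ω)) / z ^ (p+1))
      (nhdsWithin 0 (Ioi 0)) (nhds s) := by
    rw [Metric.tendsto_nhdsWithin_nhds]
    intro ε hε
    have hcw : ContinuousWithinAt (fun ω => Real.sqrt (W ω)) (Icc 0 Z) 0 :=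
      hsc 0 ⟨le_rfl, hZ.le⟩
    rw [Metric.continuousWithinAt_iff] at hcw
    obtain ⟨δ, hδ, hδ'⟩ := hcw (ε/2) (by linarith)
    refine ⟨min δ Z, lt_min hδ hZ, ?_⟩
    intro z hz hzd
    have hz0 : (0:ℝ) < z := hz
    rw [Real.dist_eq, sub_zero, abs_of_nonneg hz0.le] at hzd
    have hzδ : z < δ := lt_of_lt_of_le hzd (min_le_left _ _)
    have hzZ : z ≤ Z := le_of_lt (lt_of_lt_of_le hzd (min_le_right _ _))
    have hbound : ∀ ω ∈ Icc (0:ℝ) z, |Real.sqrt (W ω) - s| ≤ ε/2 := by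
      intro ω hω
      have hωZ : ω ∈ Icc (0:ℝ) Z := ⟨hω.1, hω.2.trans hzZ⟩
      have hωd : dist ω 0 < δ := by
        rw [Real.dist_eq, sub_zero, abs_of_nonneg hω.1]
        exact lt_of_le_of_lt hω.2 hzδ
      have := hδ' hωZ hωd
      rw [Real.dist_eq] at this
      exact this.le
    have hzp : 0 < z ^ (p+1) := Real.rpow_pos_of_pos hz0 _
    have hrpow : (∫ ω in (0:ℝ)..z, ω ^ p) = z ^ (p+1) / (p+1) := by
      rw [integral_rpow (Or.inl hp), Real.zero_rpow (by linarith : p + 1 ≠ 0)]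
      ring
    have hintg := hInt z ⟨hz0, hzZ⟩
    have hintu : IntervalIntegrable (fun ω => ω ^ p * (s + ε/2)) MeasureTheory.volume 0 z :=
      (intervalIntegral.intervalIntegrable_rpow' hp).mul_const _
    have hintl : IntervalIntegrable (fun ω => ω ^ p * (s - ε/2)) MeasureTheory.volume 0 z :=
      (intervalIntegral.intervalIntegrable_rpow' hp).mul_const _
    have hup : (∫ ω in (0:ℝ)..z, ω ^ p * Real.sqrt (W ω)) ≤ (s + ε/2) * (z ^ (p+1) / (p+1)) := by
      have h2 := intervalIntegral.integral_mono_on hz0.le hintg hintu (by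
        intro ω hω
        have h1 : (0:ℝ) ≤ ω ^ p := Real.rpow_nonneg hω.1 _
        have h2 := (abs_le.mp (hbound ω hω)).2
        exact mul_le_mul_of_nonneg_left (by linarith) h1)
      rw [intervalIntegral.integral_mul_const, hrpow] at h2
      linarith [h2]
    have hlo : (s - ε/2) * (z ^ (p+1) / (p+1)) ≤ ∫ ω in (0:ℝ)..z, ω ^ p * Real.sqrt (W ω) := by
      have h2 := intervalIntegral.integral_mono_on hz0.le hintl hintg (by
        intro ω hω
        have h1 : (0:ℝ) ≤ ω ^ p := Real.rpow_nonneg hω.1 _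
        have h2 := (abs_le.mp (hbound ω hω)).1
        exact mul_le_mul_of_nonneg_left (by linarith) h1)
      rw [intervalIntegral.integral_mul_const, hrpow] at h2
      linarith [h2]
    rw [Real.dist_eq]
    have hub : (p+1) * (∫ ω in (0:ℝ)..z, ω ^ p * Real.sqrt (W ω)) / z ^ (p+1) ≤ s + ε/2 := by
      rw [div_le_iff₀ hzp]
      calc (p+1) * (∫ ω in (0:ℝ)..z, ω ^ p * Real.sqrt (W ω))
          ≤ (p+1) * ((s + ε/2) * (z ^ (p+1) / (p+1))) :=
            mul_le_mul_of_nonneg_left hup hp1.le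
        _ = (s + ε/2) * z ^ (p+1) := by field_simp
    have hlb : s - ε/2 ≤ (p+1) * (∫ ω in (0:ℝ)..z, ω ^ p * Real.sqrt (W ω)) / z ^ (p+1) := by
      rw [le_div_iff₀ hzp]
      calc (s - ε/2) * z ^ (p+1)
          = (p+1) * ((s - ε/2) * (z ^ (p+1) / (p+1))) := by field_simp
        _ ≤ (p+1) * (∫ ω in (0:ℝ)..z, ω ^ p * Real.sqrt (W ω)) :=
            mul_le_mul_of_nonneg_left hlo hp1.le
    have : |(p+1) * (∫ ω in (0:ℝ)..z, ω ^ p * Real.sqrt (W ω)) / z ^ (p+1) - s| ≤ ε/2 :=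
      abs_le.mpr ⟨by linarith, by linarith⟩
    linarith
  refine ⟨s ^ e, ?_, ?_⟩
  · have heq : ∀ᶠ z in nhdsWithin 0 (Ioi 0),
        ((p+1) * (∫ ω in (0:ℝ)..z, ω ^ p * Real.sqrt (W ω)) / z ^ (p+1)) ^ e = ξ z := by
      filter_upwards [Ioc_mem_nhdsGT_of_mem ⟨le_rfl, hZ⟩] with z hz
      have hz0 : (0:ℝ) < z := hz.1
      have hI : 0 ≤ ∫ ω in (0:ℝ)..z, ω ^ p * Real.sqrt (W ω) :=
        intervalIntegral.integral_nonneg hz0.le (fun ω hω =>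
          mul_nonneg (Real.rpow_nonneg hω.1 _) (Real.sqrt_nonneg _))
      have hnum : 0 ≤ (p+1) * ∫ ω in (0:ℝ)..z, ω ^ p * Real.sqrt (W ω) :=
        mul_nonneg hp1.le hI
      rw [hξ z hz, hζ z, hc]
      rw [Real.div_rpow hnum (Real.rpow_nonneg hz0.le _)]
      congr 1
      rw [← Real.rpow_mul hz0.le, hpe, Real.rpow_one]
    exact (key.rpow_const (Or.inl hs.ne')).congr' heq
  · rw [← Real.rpow_mul hs.le]
    have h2 : e * ((κ:ℝ)+2) = 2 := by rw [hedef]; field_simp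
    rw [h2, show (2:ℝ) = ((2:ℕ):ℝ) by norm_num, Real.rpow_natCast, hsdef,
      Real.sq_sqrt hW0.le]
end

section
/- Fix κ ≥ 2 an integer and a continuous function E₀ : [0,Z] → ℂ with E₀(0) ≠ 0. Define γ₀(ζ) = (1/(2ζ^{κ/2})) ∫_ζ^Z E₀(ω) ω^{-κ/2} dω for ζ ∈ (0,Z). Then if κ ≠ 2, γ₀(ζ) · ζ^{κ-1} → E₀(0)/(κ-2) as ζ → 0⁺; and if κ = 2, γ₀(ζ)·ζ/(-log ζ) → E₀(0)/2 as ζ → 0⁺. In particular γ₀ does not extend continuously to ζ = 0. -/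
open Set Filter
open MeasureTheory intervalIntegral Real


lemma aux_int {Z : ℝ} {f : ℝ → ℂ} (hf : ContinuousOn f (Icc 0 Z))
    (p : ℝ) {a b : ℝ} (ha : a ∈ Ioc (0:ℝ) Z) (hb : b ∈ Ioc (0:ℝ) Z) :
    IntervalIntegrable (fun ω => f ω * ((ω ^ (-p) : ℝ) : ℂ)) volume a b := by
  apply ContinuousOn.intervalIntegrable
  have hsub : Set.uIcc a b ⊆ Icc 0 Z :=
    Set.uIcc_subset_Icc ⟨ha.1.le, ha.2⟩ ⟨hb.1.le, hb.2⟩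
  have hpos : ∀ x ∈ Set.uIcc a b, (0:ℝ) < x := by
    intro x hx
    rcases Set.mem_uIcc.mp hx with h | h
    · exact lt_of_lt_of_le ha.1 h.1
    · exact lt_of_lt_of_le hb.1 h.1
  exact (hf.mono hsub).mul (Complex.continuous_ofReal.comp_continuousOn
    (continuousOn_id.rpow_const (fun x hx => Or.inl (hpos x hx).ne')))

lemma aux_rpow_int {a b p : ℝ} (ha : 0 < a) (hb : 0 < b) (hp : p ≠ 1) :
    ∫ ω in a..b, ω ^ (-p) = (b ^ (1-p) - a ^ (1-p)) / (1-p) := by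
  rw [integral_rpow (Or.inr ⟨by intro h; apply hp; linarith [neg_eq_iff_eq_neg.mp h], by
    intro h; rcases Set.mem_uIcc.mp h with h | h <;> linarith [h.1]⟩)]
  ring_nf

lemma errA {Z : ℝ} (hZ : 0 < Z) {D : ℝ → ℂ} (hD : ContinuousOn D (Icc 0 Z)) (hD0 : D 0 = 0)
    {p : ℝ} (hp : 1 < p) :
    Tendsto (fun ζ : ℝ => ((ζ ^ (p-1) : ℝ) : ℂ) * ∫ ω in ζ..Z, D ω * ((ω ^ (-p) : ℝ) : ℂ))
      (nhdsWithin 0 (Ioi 0)) (nhds 0) := by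
  rw [NormedAddCommGroup.tendsto_nhds_zero]
  intro ε hε
  set ε' : ℝ := ε * (p-1) / 4 with hε'def
  have hp1 : (0:ℝ) < p - 1 := by linarith
  have hε' : 0 < ε' := by positivity
  obtain ⟨δ, hδpos, hδ⟩ := Metric.tendsto_nhdsWithin_nhds.mp (hD 0 ⟨le_rfl, hZ.le⟩) ε' hε'
  set δ₀ : ℝ := min (δ/2) (Z/2) with hδ₀def
  have hδ₀pos : 0 < δ₀ := lt_min (by linarith) (by linarith)
  have hδ₀Z : δ₀ ≤ Z := le_trans (min_le_right _ _) (by linarith)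
  have hδ₀mem : δ₀ ∈ Ioc (0:ℝ) Z := ⟨hδ₀pos, hδ₀Z⟩
  set C : ℝ := ‖∫ ω in δ₀..Z, D ω * ((ω ^ (-p) : ℝ) : ℂ)‖ with hCdef
  have hCnn : 0 ≤ C := norm_nonneg _
  -- eventually: ζ ∈ Ioo 0 δ₀ and ζ^(p-1)*C < ε/2
  have hev1 : ∀ᶠ ζ in nhdsWithin (0:ℝ) (Ioi 0), ζ ∈ Ioo (0:ℝ) δ₀ :=
    Ioo_mem_nhdsGT_of_mem ⟨le_rfl, hδ₀pos⟩
  have htend : Tendsto (fun ζ : ℝ => ζ ^ (p-1) * C) (nhdsWithin 0 (Ioi 0)) (nhds 0) := by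
    have h1 : Tendsto (fun x : ℝ => x ^ (p-1)) (nhdsWithin 0 (Ioi 0)) (nhds 0) := by
      have := (Real.continuousAt_rpow_const 0 (p-1) (Or.inr (by linarith))).tendsto
      rw [Real.zero_rpow hp1.ne'] at this
      exact this.mono_left nhdsWithin_le_nhds
    simpa using h1.mul_const C
  have hev2 : ∀ᶠ ζ in nhdsWithin (0:ℝ) (Ioi 0), ζ ^ (p-1) * C < ε/2 :=
    htend.eventually_lt_const (by positivity)
  filter_upwards [hev1, hev2] with ζ hζ hζC
  obtain ⟨hζ0, hζδ⟩ := hζ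
  have hζZ : ζ ∈ Ioc (0:ℝ) Z := ⟨hζ0, le_trans hζδ.le hδ₀Z⟩
  -- split integral
  have hi1 : IntervalIntegrable (fun ω => D ω * ((ω ^ (-p) : ℝ) : ℂ)) volume ζ δ₀ :=
    aux_int hD p hζZ hδ₀mem
  have hi2 : IntervalIntegrable (fun ω => D ω * ((ω ^ (-p) : ℝ) : ℂ)) volume δ₀ Z :=
    aux_int hD p hδ₀mem ⟨hZ, le_rfl⟩
  have hsplit : (∫ ω in ζ..Z, D ω * ((ω ^ (-p) : ℝ) : ℂ))
      = (∫ ω in ζ..δ₀, D ω * ((ω ^ (-p) : ℝ) : ℂ)) + ∫ ω in δ₀..Z, D ω * ((ω ^ (-p) : ℝ) : ℂ) :=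
    (integral_add_adjacent_intervals hi1 hi2).symm
  -- bound on the near part
  have hbound : ‖∫ ω in ζ..δ₀, D ω * ((ω ^ (-p) : ℝ) : ℂ)‖ ≤ |∫ ω in ζ..δ₀, ε' * ω ^ (-p)| := by
    apply intervalIntegral.norm_integral_le_abs_of_norm_le
    · filter_upwards [ae_restrict_mem measurableSet_uIoc] with t ht
      rw [Set.uIoc_of_le hζδ.le] at ht
      have ht0 : 0 < t := lt_trans hζ0 ht.1
      have htZ : t ∈ Icc (0:ℝ) Z := ⟨ht0.le, le_trans ht.2 hδ₀Z⟩
      have htδ : dist t 0 < δ := by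
        rw [Real.dist_eq, sub_zero, abs_of_pos ht0]
        calc t ≤ δ₀ := ht.2
          _ ≤ δ/2 := min_le_left _ _
          _ < δ := by linarith
      have hDt : ‖D t‖ ≤ ε' := by
        have := hδ htZ htδ
        rw [dist_eq_norm, hD0, sub_zero] at this
        exact this.le
      rw [norm_mul, Complex.norm_real, Real.norm_eq_abs, abs_of_pos (rpow_pos_of_pos ht0 _)]
      exact mul_le_mul_of_nonneg_right hDt (rpow_pos_of_pos ht0 _).le
    · exact (ContinuousOn.intervalIntegrable (by
        apply ContinuousOn.mul continuousOn_const
        apply continuousOn_id.rpow_const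
        intro x hx
        rcases Set.mem_uIcc.mp hx with h | h
        · exact Or.inl (lt_of_lt_of_le hζ0 h.1).ne'
        · exact Or.inl (lt_of_lt_of_le hδ₀pos h.1).ne'))
  have hval : (∫ ω in ζ..δ₀, ε' * ω ^ (-p)) = ε' * ((δ₀ ^ (1-p) - ζ ^ (1-p)) / (1-p)) := by
    rw [intervalIntegral.integral_const_mul, aux_rpow_int hζ0 hδ₀pos (by linarith)]
  have hmono : δ₀ ^ (1-p) ≤ ζ ^ (1-p) :=
    Real.rpow_le_rpow_of_nonpos hζ0 hζδ.le (by linarith)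
  have h2 : (0:ℝ) < δ₀ ^ (1-p) := rpow_pos_of_pos hδ₀pos _
  have hval2 : |∫ ω in ζ..δ₀, ε' * ω ^ (-p)| ≤ ε' * ζ ^ (1-p) / (p-1) := by
    rw [hval]
    have hne1 : (1:ℝ) - p ≠ 0 := by linarith
    have h1 : ε' * ((δ₀ ^ (1-p) - ζ ^ (1-p)) / (1-p)) = ε' * (ζ ^ (1-p) - δ₀ ^ (1-p)) / (p-1) := by
      field_simp
      ring
    rw [h1, abs_of_nonneg (div_nonneg (mul_nonneg hε'.le (by linarith)) hp1.le)]
    rw [div_le_div_iff_of_pos_right hp1]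
    nlinarith
  -- combine
  have hζp1 : (0:ℝ) < ζ ^ (p-1) := rpow_pos_of_pos hζ0 _
  have hcancel : ζ ^ (p-1) * ζ ^ (1-p) = 1 := by
    rw [← Real.rpow_add hζ0]; norm_num
  calc ‖((ζ ^ (p-1) : ℝ) : ℂ) * ∫ ω in ζ..Z, D ω * ((ω ^ (-p) : ℝ) : ℂ)‖
      = ζ ^ (p-1) * ‖∫ ω in ζ..Z, D ω * ((ω ^ (-p) : ℝ) : ℂ)‖ := by
        rw [norm_mul, Complex.norm_real, Real.norm_eq_abs, abs_of_pos hζp1]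
    _ ≤ ζ ^ (p-1) * (‖∫ ω in ζ..δ₀, D ω * ((ω ^ (-p) : ℝ) : ℂ)‖ + C) := by
        apply mul_le_mul_of_nonneg_left _ hζp1.le
        rw [hsplit]; exact norm_add_le _ _
    _ ≤ ζ ^ (p-1) * (ε' * ζ ^ (1-p) / (p-1) + C) := by
        apply mul_le_mul_of_nonneg_left _ hζp1.le
        linarith [le_trans hbound hval2]
    _ = ε' / (p-1) * (ζ ^ (p-1) * ζ ^ (1-p)) + ζ ^ (p-1) * C := by ring
    _ = ε/4 + ζ ^ (p-1) * C := by rw [hcancel, hε'def]; field_simp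
    _ < ε := by linarith

lemma mainA {Z : ℝ} (hZ : 0 < Z) {E₀ : ℝ → ℂ} (hE : ContinuousOn E₀ (Icc 0 Z))
    {p : ℝ} (hp : 1 < p) :
    Tendsto (fun ζ : ℝ => ((ζ ^ (p-1) : ℝ) : ℂ) * ∫ ω in ζ..Z, E₀ ω * ((ω ^ (-p) : ℝ) : ℂ))
      (nhdsWithin 0 (Ioi 0)) (nhds (E₀ 0 / ((p : ℂ) - 1))) := by
  have hp1 : (0:ℝ) < p - 1 := by linarith
  have hD : ContinuousOn (fun ω => E₀ ω - E₀ 0) (Icc 0 Z) := hE.sub continuousOn_const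
  have herr := errA hZ hD (by simp) hp
  -- main term: ζ^(p-1)*(Z^(1-p)-ζ^(1-p))/(1-p) → 1/(p-1)
  have hrp : Tendsto (fun x : ℝ => x ^ (p-1)) (nhdsWithin 0 (Ioi 0)) (nhds 0) := by
    have := (Real.continuousAt_rpow_const 0 (p-1) (Or.inr hp1.le)).tendsto
    rw [Real.zero_rpow hp1.ne'] at this
    exact this.mono_left nhdsWithin_le_nhds
  have hmainR : Tendsto (fun ζ : ℝ => ζ ^ (p-1) * ((Z ^ (1-p) - ζ ^ (1-p)) / (1-p)))
      (nhdsWithin 0 (Ioi 0)) (nhds (1 / (p-1))) := by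
    have h1 : Tendsto (fun ζ : ℝ => (ζ ^ (p-1) * Z ^ (1-p) - 1) / (1-p))
        (nhdsWithin 0 (Ioi 0)) (nhds ((0 * Z ^ (1-p) - 1) / (1-p))) := by
      exact (((hrp.mul_const _).sub_const 1).div_const _)
    have h2 : (0 * Z ^ (1-p) - 1) / (1-p) = 1 / (p-1) := by
      rw [div_eq_div_iff (by linarith) (by linarith)]; ring
    rw [h2] at h1
    apply h1.congr'
    filter_upwards [self_mem_nhdsWithin] with ζ (hζ : 0 < ζ)
    have h5 : ζ ^ (p-1) * ζ ^ (1-p) = 1 := by rw [← Real.rpow_add hζ]; norm_num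
    show (ζ ^ (p-1) * Z ^ (1-p) - 1) / (1-p) = ζ ^ (p-1) * ((Z ^ (1-p) - ζ ^ (1-p)) / (1-p))
    rw [← mul_div_assoc]
    congr 1
    linear_combination h5
  have hmain : Tendsto (fun ζ : ℝ => E₀ 0 * ((ζ ^ (p-1) * ((Z ^ (1-p) - ζ ^ (1-p)) / (1-p)) : ℝ) : ℂ))
      (nhdsWithin 0 (Ioi 0)) (nhds (E₀ 0 / ((p:ℂ) - 1))) := by
    have := (Complex.continuous_ofReal.tendsto _).comp hmainR
    have h3 := this.const_mul (E₀ 0)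
    have h4 : E₀ 0 / ((p:ℂ) - 1) = E₀ 0 * (((1:ℝ)/(p-1) : ℝ) : ℂ) := by
      push_cast
      rw [mul_one_div]
    rw [h4]
    exact h3
  have hsum := herr.add hmain
  rw [zero_add] at hsum
  apply hsum.congr'
  filter_upwards [Ioo_mem_nhdsGT_of_mem (show (0:ℝ) ∈ Ico 0 Z from ⟨le_rfl, hZ⟩)] with ζ hζ
  have hζ0 : (0:ℝ) < ζ := hζ.1
  have hζm : ζ ∈ Ioc (0:ℝ) Z := ⟨hζ0, hζ.2.le⟩
  have hZm : Z ∈ Ioc (0:ℝ) Z := ⟨hZ, le_rfl⟩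
  have hiD := aux_int hD p hζm hZm
  have hiC := aux_int (f := fun _ => E₀ 0) continuousOn_const p hζm hZm
  have hdecomp : (∫ ω in ζ..Z, E₀ ω * ((ω ^ (-p) : ℝ) : ℂ))
      = (∫ ω in ζ..Z, (E₀ ω - E₀ 0) * ((ω ^ (-p) : ℝ) : ℂ))
        + E₀ 0 * (((Z ^ (1-p) - ζ ^ (1-p)) / (1-p) : ℝ) : ℂ) := by
    rw [show (fun ω : ℝ => E₀ ω * ((ω ^ (-p) : ℝ) : ℂ))
        = fun ω : ℝ => (E₀ ω - E₀ 0) * ((ω ^ (-p) : ℝ) : ℂ) + E₀ 0 * ((ω ^ (-p) : ℝ) : ℂ)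
        from funext fun ω => by ring,
      intervalIntegral.integral_add hiD hiC, intervalIntegral.integral_const_mul,
      intervalIntegral.integral_ofReal, aux_rpow_int hζ0 hZ (by linarith)]
  rw [hdecomp]
  push_cast
  ring

lemma negLogTendsto : Tendsto (fun ζ : ℝ => -Real.log ζ) (nhdsWithin 0 (Ioi 0)) atTop :=
  tendsto_neg_atBot_atTop.comp Real.tendsto_log_nhdsGT_zero

lemma aux_inv_int {a b : ℝ} (ha : 0 < a) (hb : 0 < b) :
    ∫ ω in a..b, ω ^ (-1:ℝ) = Real.log b - Real.log a := by
  rw [show (fun ω : ℝ => ω ^ (-1:ℝ)) = fun ω : ℝ => ω⁻¹ from funext fun ω => Real.rpow_neg_one ω]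
  rw [integral_inv (by intro h; rcases Set.mem_uIcc.mp h with h | h <;> linarith [h.1])]
  rw [Real.log_div hb.ne' ha.ne']

lemma errB {Z : ℝ} (hZ : 0 < Z) {D : ℝ → ℂ} (hD : ContinuousOn D (Icc 0 Z)) (hD0 : D 0 = 0) :
    Tendsto (fun ζ : ℝ => (∫ ω in ζ..Z, D ω * ((ω ^ (-1:ℝ) : ℝ) : ℂ)) / ((-Real.log ζ : ℝ) : ℂ))
      (nhdsWithin 0 (Ioi 0)) (nhds 0) := by
  rw [NormedAddCommGroup.tendsto_nhds_zero]
  intro ε hε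
  set ε' : ℝ := ε / 2 with hε'def
  have hε' : 0 < ε' := by positivity
  obtain ⟨δ, hδpos, hδ⟩ := Metric.tendsto_nhdsWithin_nhds.mp (hD 0 ⟨le_rfl, hZ.le⟩) ε' hε'
  set δ₀ : ℝ := min (δ/2) (Z/2) with hδ₀def
  have hδ₀pos : 0 < δ₀ := lt_min (by linarith) (by linarith)
  have hδ₀Z : δ₀ ≤ Z := le_trans (min_le_right _ _) (by linarith)
  have hδ₀mem : δ₀ ∈ Ioc (0:ℝ) Z := ⟨hδ₀pos, hδ₀Z⟩
  set C : ℝ := ‖∫ ω in δ₀..Z, D ω * ((ω ^ (-1:ℝ) : ℝ) : ℂ)‖ with hCdef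
  have hCnn : 0 ≤ C := norm_nonneg _
  set K : ℝ := ε' * Real.log δ₀ + C with hKdef
  have hev1 : ∀ᶠ ζ in nhdsWithin (0:ℝ) (Ioi 0), ζ ∈ Ioo (0:ℝ) (min δ₀ 1) :=
    Ioo_mem_nhdsGT_of_mem ⟨le_rfl, lt_min hδ₀pos one_pos⟩
  have htendK : Tendsto (fun ζ : ℝ => K * (-Real.log ζ)⁻¹) (nhdsWithin 0 (Ioi 0)) (nhds 0) := by
    have := (tendsto_inv_atTop_zero.comp negLogTendsto).const_mul K
    simpa using this
  have hev2 : ∀ᶠ ζ in nhdsWithin (0:ℝ) (Ioi 0), K * (-Real.log ζ)⁻¹ < ε/2 :=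
    htendK.eventually_lt_const (by positivity)
  filter_upwards [hev1, hev2] with ζ hζ hζK
  obtain ⟨hζ0, hζb⟩ := hζ
  have hζδ : ζ < δ₀ := lt_of_lt_of_le hζb (min_le_left _ _)
  have hζ1 : ζ < 1 := lt_of_lt_of_le hζb (min_le_right _ _)
  have hL : 0 < -Real.log ζ := by
    have := Real.log_neg hζ0 hζ1
    linarith
  have hζZ : ζ ∈ Ioc (0:ℝ) Z := ⟨hζ0, le_trans hζδ.le hδ₀Z⟩
  have hi1 := aux_int hD 1 hζZ hδ₀mem
  have hi2 := aux_int hD 1 hδ₀mem ⟨hZ, le_rfl⟩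
  have hsplit : (∫ ω in ζ..Z, D ω * ((ω ^ (-1:ℝ) : ℝ) : ℂ))
      = (∫ ω in ζ..δ₀, D ω * ((ω ^ (-1:ℝ) : ℝ) : ℂ))
        + ∫ ω in δ₀..Z, D ω * ((ω ^ (-1:ℝ) : ℝ) : ℂ) :=
    (integral_add_adjacent_intervals hi1 hi2).symm
  have hbound : ‖∫ ω in ζ..δ₀, D ω * ((ω ^ (-1:ℝ) : ℝ) : ℂ)‖ ≤ |∫ ω in ζ..δ₀, ε' * ω ^ (-1:ℝ)| := by
    apply intervalIntegral.norm_integral_le_abs_of_norm_le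
    · filter_upwards [ae_restrict_mem measurableSet_uIoc] with t ht
      rw [Set.uIoc_of_le hζδ.le] at ht
      have ht0 : 0 < t := lt_trans hζ0 ht.1
      have htZ : t ∈ Icc (0:ℝ) Z := ⟨ht0.le, le_trans ht.2 hδ₀Z⟩
      have htδ : dist t 0 < δ := by
        rw [Real.dist_eq, sub_zero, abs_of_pos ht0]
        calc t ≤ δ₀ := ht.2
          _ ≤ δ/2 := min_le_left _ _
          _ < δ := by linarith
      have hDt : ‖D t‖ ≤ ε' := by
        have := hδ htZ htδ
        rw [dist_eq_norm, hD0, sub_zero] at this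
        exact this.le
      rw [norm_mul, Complex.norm_real, Real.norm_eq_abs, abs_of_pos (rpow_pos_of_pos ht0 _)]
      exact mul_le_mul_of_nonneg_right hDt (rpow_pos_of_pos ht0 _).le
    · exact (ContinuousOn.intervalIntegrable (by
        apply ContinuousOn.mul continuousOn_const
        apply continuousOn_id.rpow_const
        intro x hx
        rcases Set.mem_uIcc.mp hx with h | h
        · exact Or.inl (lt_of_lt_of_le hζ0 h.1).ne'
        · exact Or.inl (lt_of_lt_of_le hδ₀pos h.1).ne'))
  have hlog : Real.log ζ < Real.log δ₀ := Real.log_lt_log hζ0 hζδ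
  have hval : |∫ ω in ζ..δ₀, ε' * ω ^ (-1:ℝ)| = ε' * (Real.log δ₀ - Real.log ζ) := by
    rw [intervalIntegral.integral_const_mul, aux_inv_int hζ0 hδ₀pos]
    rw [abs_of_nonneg (mul_nonneg hε'.le (by linarith))]
  -- norm of quotient
  have hnormq : ‖(∫ ω in ζ..Z, D ω * ((ω ^ (-1:ℝ) : ℝ) : ℂ)) / ((-Real.log ζ : ℝ) : ℂ)‖
      = ‖∫ ω in ζ..Z, D ω * ((ω ^ (-1:ℝ) : ℝ) : ℂ)‖ / (-Real.log ζ) := by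
    rw [norm_div, Complex.norm_real, Real.norm_eq_abs, abs_of_pos hL]
  rw [hnormq]
  have hnum : ‖∫ ω in ζ..Z, D ω * ((ω ^ (-1:ℝ) : ℝ) : ℂ)‖
      ≤ ε' * (Real.log δ₀ - Real.log ζ) + C := by
    rw [hsplit]
    calc ‖_ + _‖ ≤ ‖∫ ω in ζ..δ₀, D ω * ((ω ^ (-1:ℝ) : ℝ) : ℂ)‖ + C := norm_add_le _ _
      _ ≤ ε' * (Real.log δ₀ - Real.log ζ) + C := by
          have := le_trans hbound (le_of_eq hval)
          linarith
  calc ‖∫ ω in ζ..Z, D ω * ((ω ^ (-1:ℝ) : ℝ) : ℂ)‖ / (-Real.log ζ)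
      ≤ (ε' * (Real.log δ₀ - Real.log ζ) + C) / (-Real.log ζ) := by
        exact (div_le_div_iff_of_pos_right hL).mpr hnum
    _ = ε' + K * (-Real.log ζ)⁻¹ := by
        have hlogne : Real.log ζ ≠ 0 := by
          intro h
          rw [h] at hL
          simp at hL
        field_simp
        ring
    _ < ε' + ε/2 := by linarith
    _ = ε := by rw [hε'def]; ring

lemma mainB {Z : ℝ} (hZ : 0 < Z) {E₀ : ℝ → ℂ} (hE : ContinuousOn E₀ (Icc 0 Z)) :
    Tendsto (fun ζ : ℝ => (∫ ω in ζ..Z, E₀ ω * ((ω ^ (-1:ℝ) : ℝ) : ℂ)) / ((-Real.log ζ : ℝ) : ℂ))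
      (nhdsWithin 0 (Ioi 0)) (nhds (E₀ 0)) := by
  have hD : ContinuousOn (fun ω => E₀ ω - E₀ 0) (Icc 0 Z) := hE.sub continuousOn_const
  have herr := errB hZ hD (by simp)
  have hmainR : Tendsto (fun ζ : ℝ => (Real.log Z - Real.log ζ) / (-Real.log ζ))
      (nhdsWithin 0 (Ioi 0)) (nhds 1) := by
    have h1 : Tendsto (fun ζ : ℝ => Real.log Z * (-Real.log ζ)⁻¹ + 1)
        (nhdsWithin 0 (Ioi 0)) (nhds 1) := by
      have := (tendsto_inv_atTop_zero.comp negLogTendsto).const_mul (Real.log Z)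
      simpa using this.add_const 1
    apply h1.congr'
    filter_upwards [Ioo_mem_nhdsGT_of_mem (show (0:ℝ) ∈ Ico 0 (min 1 1) from ⟨le_rfl, by norm_num⟩)]
      with ζ hζ
    have hL : 0 < -Real.log ζ := by
      have := Real.log_neg hζ.1 (lt_of_lt_of_le hζ.2 (min_le_left _ _))
      linarith
    have hlogne : Real.log ζ ≠ 0 := by intro h; rw [h] at hL; simp at hL
    field_simp
    ring
  have hmain : Tendsto (fun ζ : ℝ => E₀ 0 * (((Real.log Z - Real.log ζ) / (-Real.log ζ) : ℝ) : ℂ))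
      (nhdsWithin 0 (Ioi 0)) (nhds (E₀ 0)) := by
    have := ((Complex.continuous_ofReal.tendsto _).comp hmainR).const_mul (E₀ 0)
    simpa using this
  have hsum := herr.add hmain
  rw [zero_add] at hsum
  apply hsum.congr'
  filter_upwards [Ioo_mem_nhdsGT_of_mem (show (0:ℝ) ∈ Ico 0 Z from ⟨le_rfl, hZ⟩)] with ζ hζ
  have hζ0 : (0:ℝ) < ζ := hζ.1
  have hζm : ζ ∈ Ioc (0:ℝ) Z := ⟨hζ0, hζ.2.le⟩
  have hZm : Z ∈ Ioc (0:ℝ) Z := ⟨hZ, le_rfl⟩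
  have hiD := aux_int hD 1 hζm hZm
  have hiC := aux_int (f := fun _ => E₀ 0) continuousOn_const 1 hζm hZm
  have hdecomp : (∫ ω in ζ..Z, E₀ ω * ((ω ^ (-1:ℝ) : ℝ) : ℂ))
      = (∫ ω in ζ..Z, (E₀ ω - E₀ 0) * ((ω ^ (-1:ℝ) : ℝ) : ℂ))
        + E₀ 0 * ((Real.log Z - Real.log ζ : ℝ) : ℂ) := by
    rw [show (fun ω : ℝ => E₀ ω * ((ω ^ (-1:ℝ) : ℝ) : ℂ))
        = fun ω : ℝ => (E₀ ω - E₀ 0) * ((ω ^ (-1:ℝ) : ℝ) : ℂ) + E₀ 0 * ((ω ^ (-1:ℝ) : ℝ) : ℂ)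
        from funext fun ω => by ring,
      intervalIntegral.integral_add hiD hiC, intervalIntegral.integral_const_mul,
      intervalIntegral.integral_ofReal, aux_inv_int hζ0 hZ]
  rw [hdecomp]
  push_cast
  ring


/-- For `κ ≥ 2` and continuous `E₀` with `E₀(0) ≠ 0`, the leading
Langer–Olver coefficient `γ₀(ζ) = (1/(2ζ^{κ/2})) ∫_ζ^Z E₀(ω) ω^{-κ/2} dω` satisfies
`γ₀(ζ) ζ^{κ-1} → E₀(0)/(κ-2)` if `κ ≠ 2`, and `γ₀(ζ) ζ/(-log ζ) → E₀(0)/2` if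
`κ = 2`; in particular `γ₀` does not extend continuously to `ζ = 0`. -/
theorem langer_olver_gamma_zero_singular
    (κ : ℤ) (hκ : 2 ≤ κ) (Z : ℝ) (hZ : 0 < Z)
    (E₀ : ℝ → ℂ) (hE : ContinuousOn E₀ (Icc 0 Z)) (hE0 : E₀ 0 ≠ 0)
    (γ₀ : ℝ → ℂ)
    (hγ : ∀ ζ ∈ Ioo (0:ℝ) Z,
        γ₀ ζ = (1 / (2 * ((ζ ^ ((κ:ℝ)/2) : ℝ) : ℂ)))
          * ∫ ω in ζ..Z, E₀ ω * ((ω ^ (-(κ:ℝ)/2) : ℝ) : ℂ)) :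
    (κ ≠ 2 → Tendsto (fun ζ : ℝ => γ₀ ζ * ((ζ ^ ((κ:ℝ) - 1) : ℝ) : ℂ))
        (nhdsWithin 0 (Ioi 0)) (nhds (E₀ 0 / ((κ : ℂ) - 2))))
    ∧ (κ = 2 → Tendsto (fun ζ : ℝ => γ₀ ζ * (ζ : ℂ) / ((-Real.log ζ : ℝ) : ℂ))
        (nhdsWithin 0 (Ioi 0)) (nhds (E₀ 0 / 2)))
    ∧ ¬ ∃ L : ℂ, Tendsto γ₀ (nhdsWithin 0 (Ioi 0)) (nhds L) := by
  have P1 : κ ≠ 2 → Tendsto (fun ζ : ℝ => γ₀ ζ * ((ζ ^ ((κ:ℝ) - 1) : ℝ) : ℂ))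
      (nhdsWithin 0 (Ioi 0)) (nhds (E₀ 0 / ((κ : ℂ) - 2))) := by
    intro hκ2
    have hκ3 : (3:ℤ) ≤ κ := by omega
    have hκ3' : (3:ℝ) ≤ (κ:ℝ) := by exact_mod_cast hκ3
    set p : ℝ := (κ:ℝ)/2 with hpdef
    have hp : 1 < p := by rw [hpdef]; linarith
    have hA := mainA hZ hE hp
    have hexp : -(κ:ℝ)/2 = -p := by rw [hpdef]; ring
    rw [hexp] at hγ
    have h2 := hA.div_const (2:ℂ)
    have hlim : E₀ 0 / ((p:ℂ) - 1) / 2 = E₀ 0 / ((κ:ℂ) - 2) := by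
      rw [div_div]
      congr 1
      rw [hpdef]
      push_cast
      ring
    rw [hlim] at h2
    apply h2.congr'
    filter_upwards [Ioo_mem_nhdsGT_of_mem (show (0:ℝ) ∈ Ico 0 Z from ⟨le_rfl, hZ⟩)] with ζ hζ
    have hζ0 : (0:ℝ) < ζ := hζ.1
    rw [hγ ζ hζ]
    have hne : ((ζ ^ p : ℝ) : ℂ) ≠ 0 :=
      Complex.ofReal_ne_zero.mpr (rpow_pos_of_pos hζ0 _).ne'
    have hsplitpow : ((ζ ^ ((κ:ℝ)-1) : ℝ) : ℂ) = ((ζ ^ p : ℝ) : ℂ) * ((ζ ^ (p-1) : ℝ) : ℂ) := by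
      rw [← Complex.ofReal_mul, ← Real.rpow_add hζ0]
      congr 2
      rw [hpdef]
      ring
    rw [hsplitpow]
    field_simp
  have P2 : κ = 2 → Tendsto (fun ζ : ℝ => γ₀ ζ * (ζ : ℂ) / ((-Real.log ζ : ℝ) : ℂ))
      (nhdsWithin 0 (Ioi 0)) (nhds (E₀ 0 / 2)) := by
    intro hκ2
    subst hκ2
    have hsimp : ∀ ζ ∈ Ioo (0:ℝ) Z,
        γ₀ ζ = (1 / (2 * (ζ : ℂ))) * ∫ ω in ζ..Z, E₀ ω * ((ω ^ (-1:ℝ) : ℝ) : ℂ) := by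
      intro ζ hζ
      have h := hγ ζ hζ
      rw [show (((2:ℤ):ℝ))/2 = (1:ℝ) by norm_num,
        show -(((2:ℤ):ℝ))/2 = (-1:ℝ) by norm_num, Real.rpow_one] at h
      exact h
    have hB := (mainB hZ hE).div_const (2:ℂ)
    rw [show E₀ 0 / 2 = E₀ 0 / 2 from rfl] at hB
    apply hB.congr'
    filter_upwards [Ioo_mem_nhdsGT_of_mem (show (0:ℝ) ∈ Ico 0 Z from ⟨le_rfl, hZ⟩)] with ζ hζ
    have hζ0 : (0:ℝ) < ζ := hζ.1
    have hne : (ζ : ℂ) ≠ 0 := Complex.ofReal_ne_zero.mpr hζ0.ne'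
    have hstep : γ₀ ζ * (ζ : ℂ) = (∫ ω in ζ..Z, E₀ ω * ((ω ^ (-1:ℝ) : ℝ) : ℂ)) / 2 := by
      rw [hsimp ζ hζ]
      field_simp
    rw [hstep]
    ring
  refine ⟨P1, P2, ?_⟩
  rintro ⟨L, hL⟩
  by_cases hκ2 : κ = 2
  · have h2 := P2 hκ2
    have hfac : Tendsto (fun ζ : ℝ => ((ζ / (-Real.log ζ) : ℝ) : ℂ))
        (nhdsWithin 0 (Ioi 0)) (nhds 0) := by
      have hreal : Tendsto (fun ζ : ℝ => ζ / (-Real.log ζ))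
          (nhdsWithin 0 (Ioi 0)) (nhds 0) := by
        have h1 : Tendsto (fun ζ : ℝ => ζ) (nhdsWithin (0:ℝ) (Ioi 0)) (nhds 0) :=
          (continuous_id.tendsto 0).mono_left nhdsWithin_le_nhds
        simpa [div_eq_mul_inv] using h1.mul (tendsto_inv_atTop_zero.comp negLogTendsto)
      have h2 := (Complex.continuous_ofReal.tendsto _).comp hreal
      rw [show ((0:ℝ):ℂ) = (0:ℂ) from Complex.ofReal_zero] at h2
      exact h2
    have hprod := hL.mul hfac
    rw [mul_zero] at hprod
    have heq : Tendsto (fun ζ : ℝ => γ₀ ζ * (ζ : ℂ) / ((-Real.log ζ : ℝ) : ℂ))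
        (nhdsWithin 0 (Ioi 0)) (nhds 0) := by
      apply hprod.congr
      intro ζ
      push_cast
      ring
    have := tendsto_nhds_unique h2 heq
    rw [div_eq_zero_iff] at this
    rcases this with h | h
    · exact hE0 h
    · norm_num at h
  · have h1 := P1 hκ2
    have hfac : Tendsto (fun ζ : ℝ => ((ζ ^ ((κ:ℝ)-1) : ℝ) : ℂ))
        (nhdsWithin 0 (Ioi 0)) (nhds 0) := by
      have hκ3 : (3:ℤ) ≤ κ := by omega
      have hκ3' : (3:ℝ) ≤ (κ:ℝ) := by exact_mod_cast hκ3
      have hreal : Tendsto (fun ζ : ℝ => ζ ^ ((κ:ℝ)-1)) (nhdsWithin 0 (Ioi 0)) (nhds 0) := by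
        have := (Real.continuousAt_rpow_const 0 ((κ:ℝ)-1) (Or.inr (by linarith))).tendsto
        rw [Real.zero_rpow (by intro h; linarith [sub_eq_zero.mp (h : (κ:ℝ)-1 = 0)])] at this
        exact this.mono_left nhdsWithin_le_nhds
      have h2 := (Complex.continuous_ofReal.tendsto _).comp hreal
      rw [show ((0:ℝ):ℂ) = (0:ℂ) from Complex.ofReal_zero] at h2
      exact h2
    have hprod := hL.mul hfac
    rw [mul_zero] at hprod
    have := tendsto_nhds_unique h1 hprod
    rw [div_eq_zero_iff] at this
    rcases this with h | h
    · exact hE0 h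
    · apply hκ2
      have : (κ:ℂ) = 2 := by linear_combination h
      exact_mod_cast this
end

section
/- Let 𝖹 > 0 and n, ℓ ∈ ℕ with n ≥ ℓ + 1. Let ψ_{n,ℓ}(r) = C · e^{-𝖹r/(2n)} (𝖹r/n)^ℓ L^{2ℓ+1}_{n-ℓ-1}(𝖹r/n), where L^α_k is the generalized Laguerre polynomial and C is any constant. Then the function u(r) = r·ψ_{n,ℓ}(r) satisfies u''(r) + (E_n + 𝖹/r - ℓ(ℓ+1)/r²) u(r) = 0 on (0,∞), where E_n = -𝖹²/(4n²). -/
open Set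

/-- For `Z > 0` and `n ≥ ℓ + 1`, the hydrogen radial function
`ψ(r) = C e^{-Zr/(2n)} (Zr/n)^ℓ L^{2ℓ+1}_{n-ℓ-1}(Zr/n)` (with `L` a solution of the
generalized Laguerre ODE `x y'' + (α+1-x) y' + k y = 0`, `α = 2ℓ+1`, `k = n-ℓ-1`)
gives `u(r) = r ψ(r)` solving `u'' + (E_n + Z/r - ℓ(ℓ+1)/r²) u = 0` on `(0,∞)`,
where `E_n = -Z²/(4n²)`. -/
theorem hydrogen_radial_wavefunction_solves
    (Z : ℝ) (hZ : 0 < Z) (n ℓ : ℕ) (hn : ℓ + 1 ≤ n)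
    (L : ℝ → ℝ) (hLsmooth : ContDiff ℝ (⊤ : ℕ∞) L)
    (hL : ∀ x : ℝ,
        x * deriv (deriv L) x + ((2 * (ℓ:ℝ) + 1) + 1 - x) * deriv L x
          + ((n:ℝ) - (ℓ:ℝ) - 1) * L x = 0)
    (C : ℝ) (ψ u : ℝ → ℝ)
    (hψ : ∀ r : ℝ,
        ψ r = C * Real.exp (-(Z * r) / (2 * (n:ℝ))) * (Z * r / (n:ℝ))^ℓ * L (Z * r / (n:ℝ)))
    (hu : ∀ r : ℝ, u r = r * ψ r) :
    ∀ r > (0:ℝ),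
      deriv (deriv u) r
        + ((-(Z^2) / (4 * (n:ℝ)^2)) + Z / r - ((ℓ:ℝ) * ((ℓ:ℝ) + 1)) / r^2) * u r = 0 := by
  have hn0 : (n:ℝ) ≠ 0 := Nat.cast_ne_zero.mpr (by omega)
  obtain ⟨c, hc⟩ : ∃ c : ℝ, c = Z / (n:ℝ) := ⟨_, rfl⟩
  have hZc : Z = c * n := by rw [hc]; field_simp
  have harg : ∀ s : ℝ, -(Z * s) / (2 * (n:ℝ)) = -(c * s) / 2 := by
    intro s; rw [hc]; ring
  have hx : ∀ s : ℝ, Z * s / (n:ℝ) = c * s := by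
    intro s; rw [hc]; ring
  have hLd : Differentiable ℝ L := hLsmooth.differentiable (by simp)
  have hL1 : ContDiff ℝ (⊤ : ℕ∞) (deriv L) := (contDiff_infty_iff_deriv.mp hLsmooth).2
  have hLd2 : Differentiable ℝ (deriv L) := hL1.differentiable (by simp)
  have hlin : ∀ s : ℝ, HasDerivAt (fun t : ℝ => c * t) c s := by
    intro s; simpa using (hasDerivAt_id s).const_mul c
  have hexp : ∀ s : ℝ, HasDerivAt (fun t : ℝ => Real.exp (-(c * t) / 2))
      (Real.exp (-(c * s) / 2) * (-c / 2)) s := by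
    intro s
    have h1 : HasDerivAt (fun t : ℝ => -(c * t) / 2) (-c / 2) s := by
      simpa using ((hlin s).neg.div_const 2)
    simpa using h1.exp
  have hLc : ∀ s : ℝ, HasDerivAt (fun t : ℝ => L (c * t)) (deriv L (c * s) * c) s := by
    intro s
    exact ((hLd (c * s)).hasDerivAt).comp s (hlin s)
  have hLc2 : ∀ s : ℝ, HasDerivAt (fun t : ℝ => deriv L (c * t))
      (deriv (deriv L) (c * s) * c) s := by
    intro s
    exact ((hLd2 (c * s)).hasDerivAt).comp s (hlin s)
  have hpow1 : ∀ s : ℝ, HasDerivAt (fun t : ℝ => t ^ (ℓ + 1)) (((ℓ:ℝ) + 1) * s ^ ℓ) s := by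
    intro s; simpa using hasDerivAt_pow (ℓ + 1) s
  have hpow0 : ∀ s : ℝ, HasDerivAt (fun t : ℝ => t ^ ℓ) ((ℓ:ℝ) * s ^ (ℓ - 1)) s :=
    fun s => hasDerivAt_pow ℓ s
  -- G and its first derivative
  have hG : ∀ s : ℝ, HasDerivAt (fun t : ℝ => Real.exp (-(c * t) / 2) * (t ^ (ℓ + 1) * L (c * t)))
      (Real.exp (-(c * s) / 2) * (-c / 2) * (s ^ (ℓ + 1) * L (c * s))
        + Real.exp (-(c * s) / 2) * (((ℓ:ℝ) + 1) * s ^ ℓ * L (c * s)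
            + s ^ (ℓ + 1) * (deriv L (c * s) * c))) s := by
    intro s
    exact (hexp s).mul ((hpow1 s).mul (hLc s))
  have hufun : u = fun t : ℝ => (C * c ^ ℓ) *
      (Real.exp (-(c * t) / 2) * (t ^ (ℓ + 1) * L (c * t))) := by
    funext t
    rw [hu, hψ, harg t, hx t, mul_pow]
    ring
  have hderiv_u : deriv u = fun s : ℝ => (C * c ^ ℓ) *
      (Real.exp (-(c * s) / 2) * (-c / 2) * (s ^ (ℓ + 1) * L (c * s))
        + Real.exp (-(c * s) / 2) * (((ℓ:ℝ) + 1) * s ^ ℓ * L (c * s)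
            + s ^ (ℓ + 1) * (deriv L (c * s) * c))) := by
    funext s
    rw [hufun]
    exact ((hG s).const_mul (C * c ^ ℓ)).deriv
  intro r hr
  -- second derivative
  have hG1 : HasDerivAt (fun s : ℝ =>
      Real.exp (-(c * s) / 2) * (-c / 2) * (s ^ (ℓ + 1) * L (c * s))
        + Real.exp (-(c * s) / 2) * (((ℓ:ℝ) + 1) * s ^ ℓ * L (c * s)
            + s ^ (ℓ + 1) * (deriv L (c * s) * c)))
      ((Real.exp (-(c * r) / 2) * (-c / 2) * (-c / 2)) * (r ^ (ℓ + 1) * L (c * r))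
        + (Real.exp (-(c * r) / 2) * (-c / 2)) * (((ℓ:ℝ) + 1) * r ^ ℓ * L (c * r)
            + r ^ (ℓ + 1) * (deriv L (c * r) * c))
        + (Real.exp (-(c * r) / 2) * (-c / 2) * (((ℓ:ℝ) + 1) * r ^ ℓ * L (c * r)
            + r ^ (ℓ + 1) * (deriv L (c * r) * c))
          + Real.exp (-(c * r) / 2) *
            ((((ℓ:ℝ) + 1) * ((ℓ:ℝ) * r ^ (ℓ - 1)) * L (c * r)
                + ((ℓ:ℝ) + 1) * r ^ ℓ * (deriv L (c * r) * c))
              + (((ℓ:ℝ) + 1) * r ^ ℓ * (deriv L (c * r) * c)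
                + r ^ (ℓ + 1) * (deriv (deriv L) (c * r) * c * c))))) r := by
    exact (((hexp r).mul_const (-c / 2)).mul ((hpow1 r).mul (hLc r))).add
      ((hexp r).mul
        ((((hpow0 r).const_mul ((ℓ:ℝ) + 1)).mul (hLc r)).add
          ((hpow1 r).mul ((hLc2 r).mul_const c))))
  have hdd : deriv (deriv u) r = (C * c ^ ℓ) *
      ((Real.exp (-(c * r) / 2) * (-c / 2) * (-c / 2)) * (r ^ (ℓ + 1) * L (c * r))
        + (Real.exp (-(c * r) / 2) * (-c / 2)) * (((ℓ:ℝ) + 1) * r ^ ℓ * L (c * r)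
            + r ^ (ℓ + 1) * (deriv L (c * r) * c))
        + (Real.exp (-(c * r) / 2) * (-c / 2) * (((ℓ:ℝ) + 1) * r ^ ℓ * L (c * r)
            + r ^ (ℓ + 1) * (deriv L (c * r) * c))
          + Real.exp (-(c * r) / 2) *
            ((((ℓ:ℝ) + 1) * ((ℓ:ℝ) * r ^ (ℓ - 1)) * L (c * r)
                + ((ℓ:ℝ) + 1) * r ^ ℓ * (deriv L (c * r) * c))
              + (((ℓ:ℝ) + 1) * r ^ ℓ * (deriv L (c * r) * c)
                + r ^ (ℓ + 1) * (deriv (deriv L) (c * r) * c * c))))) := by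
    rw [hderiv_u]
    exact (hG1.const_mul (C * c ^ ℓ)).deriv
  rw [hdd, hufun]
  have hODE := hL (c * r)
  have hsub : (ℓ:ℝ) * r ^ (ℓ - 1) = (ℓ:ℝ) * r ^ ℓ / r := by
    cases ℓ with
    | zero => simp
    | succ m =>
      have : r ^ (m + 1) = r ^ m * r := pow_succ r m
      field_simp [this]
      simp [pow_succ]
  rw [hsub]
  simp only [pow_succ]
  rw [hZc]
  set E := Real.exp (-(c * r) / 2) with hE
  field_simp [hr.ne', hn0]
  linear_combination (C * c ^ ℓ * E * r ^ ℓ * 16 * c * r) * hODE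
end
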